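/- The following four identities hold in End(V): (qAB − q^{−1}BA)/(q − q^{−1}) = ab·I, (qBA* − q^{−1}A*B)/(q − q^{−1}) = a*b·I, (qA*B* − q^{−1}B*A*)/(q − q^{−1}) = a*b*·I, and (qB*A − q^{−1}AB*)/(q − q^{−1}) = ab*·I. -/

import Mathlib

noncomputable section

open Submodule

variable {K : Type*} [Field K]

/-- `[n]_q = (q^n − q^{−n})/(q − q^{−1})`. -/
def qInt (q : K) (n : ℤ) : K := (q ^ n - q ^ (-n)) / (q - q⁻¹)

/-- Elements `y₀⁺, y₁⁺, y₀⁻, y₁⁻, k₀, k₀⁻¹, k₁, k₁⁻¹` of a unital associative `K`-algebra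
satisfy the alternate relations. -/
structure AlternateRelations (q : K) {A : Type*} [Ring A] [Algebra K A]
    (yp ym k kinv : Fin 2 → A) : Prop where
  k_kinv : ∀ i, k i * kinv i = 1
  kinv_k : ∀ i, kinv i * k i = 1
  central_yp : ∀ i, k 0 * k 1 * yp i = yp i * (k 0 * k 1)
  central_ym : ∀ i, k 0 * k 1 * ym i = ym i * (k 0 * k 1)
  central_k : ∀ i, k 0 * k 1 * k i = k i * (k 0 * k 1)
  central_kinv : ∀ i, k 0 * k 1 * kinv i = kinv i * (k 0 * k 1)
  rel_yp_k : ∀ i, (q - q⁻¹)⁻¹ • (q • (yp i * k i) - q⁻¹ • (k i * yp i)) = 1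
  rel_k_ym : ∀ i, (q - q⁻¹)⁻¹ • (q • (k i * ym i) - q⁻¹ • (ym i * k i)) = 1
  rel_ym_yp : ∀ i, (q - q⁻¹)⁻¹ • (q • (ym i * yp i) - q⁻¹ • (yp i * ym i)) = 1
  rel_yp_ym : ∀ i j, i ≠ j →
    (q - q⁻¹)⁻¹ • (q • (yp i * ym j) - q⁻¹ • (ym j * yp i)) = kinv 0 * kinv 1
  serre_p : ∀ i j, i ≠ j →
    yp i ^ 3 * yp j - qInt q 3 • (yp i ^ 2 * yp j * yp i)
      + qInt q 3 • (yp i * yp j * yp i ^ 2) - yp j * yp i ^ 3 = 0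
  serre_m : ∀ i j, i ≠ j →
    ym i ^ 3 * ym j - qInt q 3 • (ym i ^ 2 * ym j * ym i)
      + qInt q 3 • (ym i * ym j * ym i ^ 2) - ym j * ym i ^ 3 = 0

/-- Elements `e₀⁺, e₁⁺, e₀⁻, e₁⁻, K₀, K₀⁻¹, K₁, K₁⁻¹` of a unital associative `K`-algebra
satisfy the Chevalley relations of `U_q(sl₂ hat)`. -/
structure ChevalleyRelations (q : K) {A : Type*} [Ring A] [Algebra K A]
    (ep em Kg Kginv : Fin 2 → A) : Prop where
  K_Kinv : ∀ i, Kg i * Kginv i = 1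
  Kinv_K : ∀ i, Kginv i * Kg i = 1
  K_comm : Kg 0 * Kg 1 = Kg 1 * Kg 0
  KepK_same : ∀ i, Kg i * ep i * Kginv i = (q ^ (2 : ℤ)) • ep i
  KemK_same : ∀ i, Kg i * em i * Kginv i = (q ^ (-2 : ℤ)) • em i
  KepK_diff : ∀ i j, i ≠ j → Kg i * ep j * Kginv i = (q ^ (-2 : ℤ)) • ep j
  KemK_diff : ∀ i j, i ≠ j → Kg i * em j * Kginv i = (q ^ (2 : ℤ)) • em j
  e_comm_same : ∀ i, ep i * em i - em i * ep i = (q - q⁻¹)⁻¹ • (Kg i - Kginv i)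
  e_comm_diff : ∀ i j, i ≠ j → ep i * em j = em j * ep i
  serre_p : ∀ i j, i ≠ j →
    ep i ^ 3 * ep j - qInt q 3 • (ep i ^ 2 * ep j * ep i)
      + qInt q 3 • (ep i * ep j * ep i ^ 2) - ep j * ep i ^ 3 = 0
  serre_m : ∀ i j, i ≠ j →
    em i ^ 3 * em j - qInt q 3 • (em i ^ 2 * em j * em i)
      + qInt q 3 • (em i * em j * em i ^ 2) - em j * em i ^ 3 = 0

variable {V : Type*} [AddCommGroup V] [Module K V]

/-- A decomposition of `V` of length `d`: nonzero subspaces `U 0, …, U d`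
(indexed by `ℤ`, with `U i = ⊥` outside `[0, d]`) whose direct sum is `V`. -/
structure IsDecomposition (d : ℕ) (U : ℤ → Submodule K V) : Prop where
  bot_of_lt : ∀ i : ℤ, i < 0 → U i = ⊥
  bot_of_gt : ∀ i : ℤ, (d : ℤ) < i → U i = ⊥
  ne_bot : ∀ i : ℤ, 0 ≤ i → i ≤ (d : ℤ) → U i ≠ ⊥
  indep : iSupIndep U
  sup_eq_top : ⨆ i, U i = ⊤

/-- `A, A*` is a tridiagonal pair on `V` with standard orderings `Vs 0, …, Vs d` and
`Vs' 0, …, Vs' d` of the eigenspaces of `A` resp. `A*`, with corresponding eigenvalues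
`θ i` resp. `θ' i`. -/
structure IsTridiagonalPair (A A' : Module.End K V) (d : ℕ)
    (Vs Vs' : ℤ → Submodule K V) (θ θ' : ℤ → K) : Prop where
  decompV : IsDecomposition d Vs
  decompV' : IsDecomposition d Vs'
  eig : ∀ i : ℤ, ∀ v ∈ Vs i, A v = θ i • v
  eig' : ∀ i : ℤ, ∀ v ∈ Vs' i, A' v = θ' i • v
  theta_inj : ∀ i j : ℤ, 0 ≤ i → i ≤ (d : ℤ) → 0 ≤ j → j ≤ (d : ℤ) → θ i = θ j → i = j
  theta'_inj : ∀ i j : ℤ, 0 ≤ i → i ≤ (d : ℤ) → 0 ≤ j → j ≤ (d : ℤ) → θ' i = θ' j → i = j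
  trid : ∀ i : ℤ, (Vs i).map A' ≤ Vs (i - 1) ⊔ Vs i ⊔ Vs (i + 1)
  trid' : ∀ i : ℤ, (Vs' i).map A ≤ Vs' (i - 1) ⊔ Vs' i ⊔ Vs' (i + 1)
  irred : ∀ W : Submodule K V, W.map A ≤ W → W.map A' ≤ W → W = ⊥ ∨ W = ⊤

/-- The sum `U m + U (m+1) + ⋯ + U n`. -/
def sumIcc (U : ℤ → Submodule K V) (m n : ℤ) : Submodule K V :=
  ⨆ j ∈ Set.Icc m n, U j

/-- Decomposition `[0D]`: the `i`-th subspace is `V_i`. -/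
def dec0D (Vs : ℤ → Submodule K V) : ℤ → Submodule K V := Vs

/-- Decomposition `[0*D*]`: the `i`-th subspace is `V*_i`. -/
def dec0sDs (Vs' : ℤ → Submodule K V) : ℤ → Submodule K V := Vs'

/-- Decomposition `[0*D]`: the `i`-th subspace is `(V*_0+⋯+V*_i) ∩ (V_i+⋯+V_d)`. -/
def dec0sD (d : ℕ) (Vs Vs' : ℤ → Submodule K V) (i : ℤ) : Submodule K V :=
  sumIcc Vs' 0 i ⊓ sumIcc Vs i (d : ℤ)

/-- Decomposition `[0*0]`: the `i`-th subspace is `(V*_0+⋯+V*_i) ∩ (V_0+⋯+V_{d−i})`. -/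
def dec0s0 (d : ℕ) (Vs Vs' : ℤ → Submodule K V) (i : ℤ) : Submodule K V :=
  sumIcc Vs' 0 i ⊓ sumIcc Vs 0 ((d : ℤ) - i)

/-- Decomposition `[D*0]`: the `i`-th subspace is `(V*_{d−i}+⋯+V*_d) ∩ (V_0+⋯+V_{d−i})`. -/
def decDs0 (d : ℕ) (Vs Vs' : ℤ → Submodule K V) (i : ℤ) : Submodule K V :=
  sumIcc Vs' ((d : ℤ) - i) (d : ℤ) ⊓ sumIcc Vs 0 ((d : ℤ) - i)

/-- Decomposition `[D*D]`: the `i`-th subspace is `(V*_{d−i}+⋯+V*_d) ∩ (V_i+⋯+V_d)`. -/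
def decDsD (d : ℕ) (Vs Vs' : ℤ → Submodule K V) (i : ℤ) : Submodule K V :=
  sumIcc Vs' ((d : ℤ) - i) (d : ℤ) ⊓ sumIcc Vs i (d : ℤ)

/-! ### Auxiliary lemmas -/

section Aux

lemma TD_sumIcc_le {U : ℤ → Submodule K V} {m n : ℤ} {T : Submodule K V}
    (h : ∀ j, m ≤ j → j ≤ n → U j ≤ T) : sumIcc U m n ≤ T :=
  iSup₂_le fun j hj => h j hj.1 hj.2

lemma TD_le_sumIcc {U : ℤ → Submodule K V} {m n j : ℤ} (h1 : m ≤ j) (h2 : j ≤ n) :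
    U j ≤ sumIcc U m n :=
  le_iSup₂_of_le j ⟨h1, h2⟩ le_rfl

lemma TD_sumIcc_mono {U : ℤ → Submodule K V} {m n m' n' : ℤ} (h1 : m' ≤ m) (h2 : n ≤ n') :
    sumIcc U m n ≤ sumIcc U m' n' :=
  TD_sumIcc_le fun _ hj1 hj2 => TD_le_sumIcc (h1.trans hj1) (hj2.trans h2)

lemma TD_sumIcc_eq_bot {U : ℤ → Submodule K V} {m n : ℤ} (h : n < m) : sumIcc U m n = ⊥ :=
  le_bot_iff.1 (TD_sumIcc_le fun j hj1 hj2 => absurd (hj1.trans hj2) (by omega))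

lemma TD_sumIcc_self {U : ℤ → Submodule K V} (j : ℤ) : sumIcc U j j = U j :=
  le_antisymm (TD_sumIcc_le fun k h1 h2 => by rw [le_antisymm h2 h1])
    (TD_le_sumIcc le_rfl le_rfl)

lemma TD_sumIcc_shrink {U : ℤ → Submodule K V} {m n m' n' : ℤ}
    (h : ∀ j, m ≤ j → j ≤ n → (j < m' ∨ n' < j) → U j = ⊥) :
    sumIcc U m n ≤ sumIcc U m' n' := by
  apply TD_sumIcc_le
  intro j h1 h2
  by_cases hj : m' ≤ j ∧ j ≤ n'
  · exact TD_le_sumIcc hj.1 hj.2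
  · rw [h j h1 h2 (by omega)]
    exact bot_le

lemma TD_shrink_top {E : Module.End K V} {U : ℤ → Submodule K V} {θ : ℤ → K}
    (heig : ∀ i : ℤ, ∀ v ∈ U i, E v = θ i • v) {m n : ℤ} {v : V}
    (hv : v ∈ sumIcc U m n) : E v - θ n • v ∈ sumIcc U m (n - 1) := by
  have hle : sumIcc U m n ≤
      Submodule.comap (E - θ n • (1 : Module.End K V)) (sumIcc U m (n - 1)) := by
    apply TD_sumIcc_le
    intro j h1 h2 w hw
    have hw' : (E - θ n • (1 : Module.End K V)) w = (θ j - θ n) • w := by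
      simp [LinearMap.sub_apply, heig j w hw, sub_smul]
    simp only [Submodule.mem_comap, hw']
    rcases eq_or_lt_of_le h2 with rfl | hlt
    · simp
    · exact TD_le_sumIcc h1 (by omega) (Submodule.smul_mem _ _ hw)
  simpa using hle hv

lemma TD_shrink_bot {E : Module.End K V} {U : ℤ → Submodule K V} {θ : ℤ → K}
    (heig : ∀ i : ℤ, ∀ v ∈ U i, E v = θ i • v) {m n : ℤ} {v : V}
    (hv : v ∈ sumIcc U m n) : E v - θ m • v ∈ sumIcc U (m + 1) n := by
  have hle : sumIcc U m n ≤
      Submodule.comap (E - θ m • (1 : Module.End K V)) (sumIcc U (m + 1) n) := by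
    apply TD_sumIcc_le
    intro j h1 h2 w hw
    have hw' : (E - θ m • (1 : Module.End K V)) w = (θ j - θ m) • w := by
      simp [LinearMap.sub_apply, heig j w hw, sub_smul]
    simp only [Submodule.mem_comap, hw']
    rcases eq_or_lt_of_le h1 with rfl | hlt
    · simp
    · exact TD_le_sumIcc (by omega) h2 (Submodule.smul_mem _ _ hw)
  simpa using hle hv

lemma TD_trid_mem {L : Module.End K V} {U : ℤ → Submodule K V}
    (htrid : ∀ i : ℤ, (U i).map L ≤ U (i - 1) ⊔ U i ⊔ U (i + 1)) {m n : ℤ} {v : V}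
    (hv : v ∈ sumIcc U m n) : L v ∈ sumIcc U (m - 1) (n + 1) := by
  have hle : sumIcc U m n ≤ Submodule.comap L (sumIcc U (m - 1) (n + 1)) := by
    apply TD_sumIcc_le
    intro j h1 h2 w hw
    have h3 : U (j - 1) ⊔ U j ⊔ U (j + 1) ≤ sumIcc U (m - 1) (n + 1) :=
      sup_le (sup_le (TD_le_sumIcc (by omega) (by omega)) (TD_le_sumIcc (by omega) (by omega)))
        (TD_le_sumIcc (by omega) (by omega))
    exact Submodule.mem_comap.2 (h3 (htrid j (Submodule.mem_map_of_mem hw)))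
  exact hle hv

lemma TD_core {q r : K} (hne : q - q⁻¹ ≠ 0)
    (X Y : Module.End K V) (v u : V) (c β β' : K)
    (hX : X v = c • v + u) (hYv : Y v = β • v) (hYu : Y u = β' • u)
    (hshift : q * β = q⁻¹ * β') (hr : β * c = r) :
    ((q - q⁻¹)⁻¹ • (q • (X * Y) - q⁻¹ • (Y * X))) v = r • v := by
  have h1 : (X * Y) v = β • (c • v + u) := by
    simp [Module.End.mul_apply, hYv, hX]
  have h2 : (Y * X) v = (c * β) • v + β' • u := by
    simp [Module.End.mul_apply, hX, hYv, hYu, smul_smul, mul_comm]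
  simp only [LinearMap.smul_apply, LinearMap.sub_apply, h1, h2]
  match_scalars
  · rw [inv_mul_eq_div, div_eq_iff hne]
    linear_combination (q - q⁻¹) * hr
  · rw [inv_mul_eq_div, div_eq_iff hne]
    linear_combination hshift

lemma TD_core' {q r : K} (hne : q - q⁻¹ ≠ 0)
    (X Y : Module.End K V) (v u : V) (c β β' : K)
    (hX : X v = c • v + u) (hYv : Y v = β • v) (hYu : Y u = β' • u)
    (hshift : q * β' = q⁻¹ * β) (hr : β * c = r) :
    ((q - q⁻¹)⁻¹ • (q • (Y * X) - q⁻¹ • (X * Y))) v = r • v := by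
  have h1 : (X * Y) v = β • (c • v + u) := by
    simp [Module.End.mul_apply, hYv, hX]
  have h2 : (Y * X) v = (c * β) • v + β' • u := by
    simp [Module.End.mul_apply, hX, hYv, hYu, smul_smul, mul_comm]
  simp only [LinearMap.smul_apply, LinearMap.sub_apply, h1, h2]
  match_scalars
  · rw [inv_mul_eq_div, div_eq_iff hne]
    linear_combination (q - q⁻¹) * hr
  · rw [inv_mul_eq_div, div_eq_iff hne]
    linear_combination hshift

lemma TD_ext_from_cover {T : ℤ → Submodule K V} (htop : (⨆ i, T i) = ⊤)
    (L : Module.End K V) (r : K)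
    (h : ∀ i : ℤ, ∀ v ∈ T i, L v = r • v) : L = r • (1 : Module.End K V) := by
  ext v
  have hv : v ∈ ⨆ i, T i := htop ▸ Submodule.mem_top
  have hLv : L v = r • v := by
    refine Submodule.iSup_induction _ (motive := fun w => L w = r • w) hv
      (fun i x hx => h i x hx) (by simp) ?_
    intro x y hx hy
    rw [map_add, hx, hy, smul_add]
  simpa using hLv

lemma TD_q_shift {q : K} (hq0 : q ≠ 0) (s t : ℤ) (h : s + 2 = t) :
    q * q ^ s = q⁻¹ * q ^ t := by
  rw [← zpow_neg_one, ← zpow_one_add₀ hq0, ← zpow_add₀ hq0]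
  congr 1
  omega

lemma TD_q_cancel {q : K} (hq0 : q ≠ 0) (s t : ℤ) (h : s + t = 0) :
    q ^ s * q ^ t = 1 := by
  rw [← zpow_add₀ hq0, h, zpow_zero]

lemma TD_q_sub_inv_ne {q : K} (hq0 : q ≠ 0) (hq : ∀ n : ℕ, 0 < n → q ^ n ≠ 1) :
    q - q⁻¹ ≠ 0 := by
  intro h
  apply hq 2 (by norm_num)
  have hq' : q = q⁻¹ := sub_eq_zero.mp h
  calc q ^ 2 = q * q := sq q
    _ = q * q⁻¹ := by rw [← hq']
    _ = 1 := mul_inv_cancel₀ hq0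

end Aux

/-- the four relations involving `A, A*, B, B*`. -/
theorem stmt5 {K : Type*} [Field K] [IsAlgClosed K]
    {V : Type*} [AddCommGroup V] [Module K V] [FiniteDimensional K V] [Nontrivial V]
    (q : K) (hq0 : q ≠ 0) (hq : ∀ n : ℕ, 0 < n → q ^ n ≠ 1)
    (A A' : Module.End K V) (d : ℕ) (Vs Vs' : ℤ → Submodule K V) (θ θ' : ℤ → K)
    (hTD : IsTridiagonalPair A A' d Vs Vs' θ θ')
    (a a' : K) (ha : a ≠ 0) (ha' : a' ≠ 0)
    (hθ : ∀ i : ℤ, 0 ≤ i → i ≤ (d : ℤ) → θ i = a * q ^ (2 * i - (d : ℤ)))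
    (hθ' : ∀ i : ℤ, 0 ≤ i → i ≤ (d : ℤ) → θ' i = a' * q ^ ((d : ℤ) - 2 * i))
    (b b' : K) (hb : b ≠ 0) (hb' : b' ≠ 0)
    (B : Module.End K V)
    (hB : ∀ i : ℤ, 0 ≤ i → i ≤ (d : ℤ) → ∀ v ∈ dec0s0 d Vs Vs' i,
      B v = (b * q ^ (2 * i - (d : ℤ))) • v)
    (B' : Module.End K V)
    (hB' : ∀ i : ℤ, 0 ≤ i → i ≤ (d : ℤ) → ∀ v ∈ decDsD d Vs Vs' i,
      B' v = (b' * q ^ ((d : ℤ) - 2 * i)) • v)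
    (Kop : Module.End K V)
    (hKop : ∀ i : ℤ, 0 ≤ i → i ≤ (d : ℤ) → ∀ v ∈ dec0sD d Vs Vs' i,
      Kop v = (q ^ (2 * i - (d : ℤ))) • v)
    (Ks : Module.End K V)
    (hKs : ∀ i : ℤ, 0 ≤ i → i ≤ (d : ℤ) → ∀ v ∈ decDs0 d Vs Vs' i,
      Ks v = (q ^ (2 * i - (d : ℤ))) • v)
    (Kinv Ksinv : Module.End K V)
    (hKinv1 : Kop * Kinv = 1) (hKinv2 : Kinv * Kop = 1)
    (hKsinv1 : Ks * Ksinv = 1) (hKsinv2 : Ksinv * Ks = 1)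
    :
    (q - q⁻¹)⁻¹ • (q • (A * B) - q⁻¹ • (B * A)) = (a * b) • (1 : Module.End K V) ∧
    (q - q⁻¹)⁻¹ • (q • (B * A') - q⁻¹ • (A' * B)) = (a' * b) • (1 : Module.End K V) ∧
    (q - q⁻¹)⁻¹ • (q • (A' * B') - q⁻¹ • (B' * A')) = (a' * b') • (1 : Module.End K V) ∧
    (q - q⁻¹)⁻¹ • (q • (B' * A) - q⁻¹ • (A * B')) = (a * b') • (1 : Module.End K V) := by
  have hd0 : (0 : ℤ) ≤ (d : ℤ) := Int.ofNat_nonneg d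
  have hne : q - q⁻¹ ≠ 0 := TD_q_sub_inv_ne hq0 hq
  have hVstop : sumIcc Vs 0 (d : ℤ) = ⊤ := by
    rw [eq_top_iff, ← hTD.decompV.sup_eq_top]
    apply iSup_le
    intro j
    rcases lt_or_ge j 0 with h | h
    · rw [hTD.decompV.bot_of_lt j h]; exact bot_le
    rcases le_or_gt j (d : ℤ) with h2 | h2
    · exact TD_le_sumIcc h h2
    · rw [hTD.decompV.bot_of_gt j h2]; exact bot_le
  -- ### the decomposition [0*0]
  have hWmem : ∀ i : ℤ, ∀ v : V, v ∈ dec0s0 d Vs Vs' i ↔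
      v ∈ sumIcc Vs' 0 i ∧ v ∈ sumIcc Vs 0 ((d:ℤ) - i) := by
    intro i v; exact Submodule.mem_inf
  have hWbot : ∀ i : ℤ, (i < 0 ∨ (d : ℤ) < i) → dec0s0 d Vs Vs' i = ⊥ := by
    intro i hi
    rcases hi with hi | hi
    · have h1 : sumIcc Vs' 0 i = ⊥ := TD_sumIcc_eq_bot (by omega)
      unfold dec0s0; rw [h1, bot_inf_eq]
    · have h1 : sumIcc Vs 0 ((d:ℤ) - i) = ⊥ := TD_sumIcc_eq_bot (by omega)
      unfold dec0s0; rw [h1, inf_bot_eq]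
  have hW1 : ∀ i : ℤ, 0 ≤ i → i ≤ (d:ℤ) → ∀ v ∈ dec0s0 d Vs Vs' i,
      A v - θ ((d:ℤ) - i) • v ∈ dec0s0 d Vs Vs' (i + 1) := by
    intro i h0 hdi v hv
    rw [hWmem] at hv
    obtain ⟨hv1, hv2⟩ := hv
    rw [hWmem]
    constructor
    · have hAv : A v ∈ sumIcc Vs' (0 - 1) (i + 1) := TD_trid_mem hTD.trid' hv1
      have hAv' : A v ∈ sumIcc Vs' 0 (i + 1) := by
        refine TD_sumIcc_shrink ?_ hAv
        intro j hj1 hj2 hj3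
        rcases hj3 with hj3 | hj3
        · exact hTD.decompV'.bot_of_lt j (by omega)
        · exact absurd hj3 (by omega)
      exact sub_mem hAv'
        (Submodule.smul_mem _ _ (TD_sumIcc_mono le_rfl (by omega) hv1))
    · have heq : (d:ℤ) - (i + 1) = (d:ℤ) - i - 1 := by ring
      rw [heq]
      exact TD_shrink_top hTD.eig hv2
  have hW2 : ∀ i : ℤ, 0 ≤ i → i ≤ (d:ℤ) → ∀ v ∈ dec0s0 d Vs Vs' i,
      A' v - θ' i • v ∈ dec0s0 d Vs Vs' (i - 1) := by
    intro i h0 hdi v hv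
    rw [hWmem] at hv
    obtain ⟨hv1, hv2⟩ := hv
    rw [hWmem]
    constructor
    · exact TD_shrink_top hTD.eig' hv1
    · have hAv : A' v ∈ sumIcc Vs (0 - 1) ((d:ℤ) - i + 1) := TD_trid_mem hTD.trid hv2
      have hAv' : A' v ∈ sumIcc Vs 0 ((d:ℤ) - (i - 1)) := by
        refine TD_sumIcc_shrink ?_ hAv
        intro j hj1 hj2 hj3
        rcases hj3 with hj3 | hj3
        · exact hTD.decompV.bot_of_lt j (by omega)
        · exact absurd hj3 (by omega)
      exact sub_mem hAv'
        (Submodule.smul_mem _ _ (TD_sumIcc_mono le_rfl (by omega) hv2))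
  have hWtop : (⨆ i, dec0s0 d Vs Vs' i) = ⊤ := by
    have hmapA : (⨆ i, dec0s0 d Vs Vs' i).map A ≤ ⨆ i, dec0s0 d Vs Vs' i := by
      rw [Submodule.map_iSup]
      apply iSup_le
      intro i
      by_cases hi : 0 ≤ i ∧ i ≤ (d:ℤ)
      · rw [Submodule.map_le_iff_le_comap]
        intro v hv
        have hu := hW1 i hi.1 hi.2 v hv
        have hAv : A v = (A v - θ ((d:ℤ) - i) • v) + θ ((d:ℤ) - i) • v := by abel
        refine Submodule.mem_comap.2 ?_
        rw [hAv]
        exact add_mem (le_iSup (fun i => dec0s0 d Vs Vs' i) (i + 1) hu)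
          (le_iSup (fun i => dec0s0 d Vs Vs' i) i (Submodule.smul_mem _ _ hv))
      · rw [hWbot i (by omega)]
        simp
    have hmapA' : (⨆ i, dec0s0 d Vs Vs' i).map A' ≤ ⨆ i, dec0s0 d Vs Vs' i := by
      rw [Submodule.map_iSup]
      apply iSup_le
      intro i
      by_cases hi : 0 ≤ i ∧ i ≤ (d:ℤ)
      · rw [Submodule.map_le_iff_le_comap]
        intro v hv
        have hu := hW2 i hi.1 hi.2 v hv
        have hAv : A' v = (A' v - θ' i • v) + θ' i • v := by abel
        refine Submodule.mem_comap.2 ?_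
        rw [hAv]
        exact add_mem (le_iSup (fun i => dec0s0 d Vs Vs' i) (i - 1) hu)
          (le_iSup (fun i => dec0s0 d Vs Vs' i) i (Submodule.smul_mem _ _ hv))
      · rw [hWbot i (by omega)]
        simp
    rcases hTD.irred _ hmapA hmapA' with h | h
    · exfalso
      apply hTD.decompV'.ne_bot 0 le_rfl hd0
      have hW0 : dec0s0 d Vs Vs' 0 = Vs' 0 := by
        unfold dec0s0
        rw [TD_sumIcc_self, sub_zero, hVstop, inf_top_eq]
      rw [eq_bot_iff, ← h, ← hW0]
      exact le_iSup (fun i => dec0s0 d Vs Vs' i) 0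
    · exact h
  have hBext : ∀ i : ℤ, ∀ v ∈ dec0s0 d Vs Vs' i,
      B v = (b * q ^ (2 * i - (d:ℤ))) • v := by
    intro i v hv
    by_cases hi : 0 ≤ i ∧ i ≤ (d:ℤ)
    · exact hB i hi.1 hi.2 v hv
    · rw [hWbot i (by omega), Submodule.mem_bot] at hv
      rw [hv]
      simp
  -- relation 1
  have rel1 : (q - q⁻¹)⁻¹ • (q • (A * B) - q⁻¹ • (B * A)) = (a * b) • (1 : Module.End K V) := by
    apply TD_ext_from_cover hWtop
    intro i v hv
    by_cases hi : 0 ≤ i ∧ i ≤ (d:ℤ)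
    · refine TD_core hne A B v (A v - θ ((d:ℤ) - i) • v) (θ ((d:ℤ) - i))
        (b * q ^ (2 * i - (d:ℤ))) (b * q ^ (2 * (i + 1) - (d:ℤ))) (by abel)
        (hB i hi.1 hi.2 v hv) (hBext (i + 1) _ (hW1 i hi.1 hi.2 v hv)) ?_ ?_
      · have := TD_q_shift hq0 (2 * i - (d:ℤ)) (2 * (i + 1) - (d:ℤ)) (by ring)
        linear_combination b * this
      · rw [hθ ((d:ℤ) - i) (by omega) (by omega)]
        have := TD_q_cancel hq0 (2 * i - (d:ℤ)) (2 * ((d:ℤ) - i) - (d:ℤ)) (by ring)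
        linear_combination a * b * this
    · rw [hWbot i (by omega), Submodule.mem_bot] at hv
      rw [hv]
      simp
  -- relation 2
  have rel2 : (q - q⁻¹)⁻¹ • (q • (B * A') - q⁻¹ • (A' * B)) = (a' * b) • (1 : Module.End K V) := by
    apply TD_ext_from_cover hWtop
    intro i v hv
    by_cases hi : 0 ≤ i ∧ i ≤ (d:ℤ)
    · refine TD_core' hne A' B v (A' v - θ' i • v) (θ' i)
        (b * q ^ (2 * i - (d:ℤ))) (b * q ^ (2 * (i - 1) - (d:ℤ))) (by abel)
        (hB i hi.1 hi.2 v hv) (hBext (i - 1) _ (hW2 i hi.1 hi.2 v hv)) ?_ ?_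
      · have := TD_q_shift hq0 (2 * (i - 1) - (d:ℤ)) (2 * i - (d:ℤ)) (by ring)
        linear_combination b * this
      · rw [hθ' i hi.1 hi.2]
        have := TD_q_cancel hq0 (2 * i - (d:ℤ)) ((d:ℤ) - 2 * i) (by ring)
        linear_combination a' * b * this
    · rw [hWbot i (by omega), Submodule.mem_bot] at hv
      rw [hv]
      simp
  -- ### the decomposition [D*D]
  have hUmem : ∀ i : ℤ, ∀ v : V, v ∈ decDsD d Vs Vs' i ↔
      v ∈ sumIcc Vs' ((d:ℤ) - i) (d:ℤ) ∧ v ∈ sumIcc Vs i (d:ℤ) := by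
    intro i v; exact Submodule.mem_inf
  have hUbot : ∀ i : ℤ, (i < 0 ∨ (d : ℤ) < i) → decDsD d Vs Vs' i = ⊥ := by
    intro i hi
    rcases hi with hi | hi
    · have h1 : sumIcc Vs' ((d:ℤ) - i) (d:ℤ) = ⊥ := TD_sumIcc_eq_bot (by omega)
      unfold decDsD; rw [h1, bot_inf_eq]
    · have h1 : sumIcc Vs i (d:ℤ) = ⊥ := TD_sumIcc_eq_bot (by omega)
      unfold decDsD; rw [h1, inf_bot_eq]
  have hU1 : ∀ i : ℤ, 0 ≤ i → i ≤ (d:ℤ) → ∀ v ∈ decDsD d Vs Vs' i,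
      A v - θ i • v ∈ decDsD d Vs Vs' (i + 1) := by
    intro i h0 hdi v hv
    rw [hUmem] at hv
    obtain ⟨hv1, hv2⟩ := hv
    rw [hUmem]
    constructor
    · have hAv : A v ∈ sumIcc Vs' ((d:ℤ) - i - 1) ((d:ℤ) + 1) := TD_trid_mem hTD.trid' hv1
      have hAv' : A v ∈ sumIcc Vs' ((d:ℤ) - (i + 1)) (d:ℤ) := by
        refine TD_sumIcc_shrink ?_ hAv
        intro j hj1 hj2 hj3
        rcases hj3 with hj3 | hj3
        · exact absurd hj3 (by omega)
        · exact hTD.decompV'.bot_of_gt j (by omega)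
      exact sub_mem hAv'
        (Submodule.smul_mem _ _ (TD_sumIcc_mono (by omega) le_rfl hv1))
    · exact TD_shrink_bot hTD.eig hv2
  have hU2 : ∀ i : ℤ, 0 ≤ i → i ≤ (d:ℤ) → ∀ v ∈ decDsD d Vs Vs' i,
      A' v - θ' ((d:ℤ) - i) • v ∈ decDsD d Vs Vs' (i - 1) := by
    intro i h0 hdi v hv
    rw [hUmem] at hv
    obtain ⟨hv1, hv2⟩ := hv
    rw [hUmem]
    constructor
    · have heq : (d:ℤ) - (i - 1) = (d:ℤ) - i + 1 := by ring
      rw [heq]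
      exact TD_shrink_bot hTD.eig' hv1
    · have hAv : A' v ∈ sumIcc Vs (i - 1) ((d:ℤ) + 1) := TD_trid_mem hTD.trid hv2
      have hAv' : A' v ∈ sumIcc Vs (i - 1) (d:ℤ) := by
        refine TD_sumIcc_shrink ?_ hAv
        intro j hj1 hj2 hj3
        rcases hj3 with hj3 | hj3
        · exact absurd hj3 (by omega)
        · exact hTD.decompV.bot_of_gt j (by omega)
      exact sub_mem hAv'
        (Submodule.smul_mem _ _ (TD_sumIcc_mono (by omega) le_rfl hv2))
  have hUtop : (⨆ i, decDsD d Vs Vs' i) = ⊤ := by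
    have hmapA : (⨆ i, decDsD d Vs Vs' i).map A ≤ ⨆ i, decDsD d Vs Vs' i := by
      rw [Submodule.map_iSup]
      apply iSup_le
      intro i
      by_cases hi : 0 ≤ i ∧ i ≤ (d:ℤ)
      · rw [Submodule.map_le_iff_le_comap]
        intro v hv
        have hu := hU1 i hi.1 hi.2 v hv
        have hAv : A v = (A v - θ i • v) + θ i • v := by abel
        refine Submodule.mem_comap.2 ?_
        rw [hAv]
        exact add_mem (le_iSup (fun i => decDsD d Vs Vs' i) (i + 1) hu)
          (le_iSup (fun i => decDsD d Vs Vs' i) i (Submodule.smul_mem _ _ hv))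
      · rw [hUbot i (by omega)]
        simp
    have hmapA' : (⨆ i, decDsD d Vs Vs' i).map A' ≤ ⨆ i, decDsD d Vs Vs' i := by
      rw [Submodule.map_iSup]
      apply iSup_le
      intro i
      by_cases hi : 0 ≤ i ∧ i ≤ (d:ℤ)
      · rw [Submodule.map_le_iff_le_comap]
        intro v hv
        have hu := hU2 i hi.1 hi.2 v hv
        have hAv : A' v = (A' v - θ' ((d:ℤ) - i) • v) + θ' ((d:ℤ) - i) • v := by abel
        refine Submodule.mem_comap.2 ?_
        rw [hAv]
        exact add_mem (le_iSup (fun i => decDsD d Vs Vs' i) (i - 1) hu)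
          (le_iSup (fun i => decDsD d Vs Vs' i) i (Submodule.smul_mem _ _ hv))
      · rw [hUbot i (by omega)]
        simp
    rcases hTD.irred _ hmapA hmapA' with h | h
    · exfalso
      apply hTD.decompV'.ne_bot (d:ℤ) hd0 le_rfl
      have hU0 : decDsD d Vs Vs' 0 = Vs' (d:ℤ) := by
        unfold decDsD
        rw [sub_zero, TD_sumIcc_self, hVstop, inf_top_eq]
      rw [eq_bot_iff, ← h, ← hU0]
      exact le_iSup (fun i => decDsD d Vs Vs' i) 0
    · exact h
  have hB'ext : ∀ i : ℤ, ∀ v ∈ decDsD d Vs Vs' i,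
      B' v = (b' * q ^ ((d:ℤ) - 2 * i)) • v := by
    intro i v hv
    by_cases hi : 0 ≤ i ∧ i ≤ (d:ℤ)
    · exact hB' i hi.1 hi.2 v hv
    · rw [hUbot i (by omega), Submodule.mem_bot] at hv
      rw [hv]
      simp
  -- relation 3
  have rel3 : (q - q⁻¹)⁻¹ • (q • (A' * B') - q⁻¹ • (B' * A')) = (a' * b') • (1 : Module.End K V) := by
    apply TD_ext_from_cover hUtop
    intro i v hv
    by_cases hi : 0 ≤ i ∧ i ≤ (d:ℤ)
    · refine TD_core hne A' B' v (A' v - θ' ((d:ℤ) - i) • v) (θ' ((d:ℤ) - i))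
        (b' * q ^ ((d:ℤ) - 2 * i)) (b' * q ^ ((d:ℤ) - 2 * (i - 1))) (by abel)
        (hB' i hi.1 hi.2 v hv) (hB'ext (i - 1) _ (hU2 i hi.1 hi.2 v hv)) ?_ ?_
      · have := TD_q_shift hq0 ((d:ℤ) - 2 * i) ((d:ℤ) - 2 * (i - 1)) (by ring)
        linear_combination b' * this
      · rw [hθ' ((d:ℤ) - i) (by omega) (by omega)]
        have := TD_q_cancel hq0 ((d:ℤ) - 2 * i) ((d:ℤ) - 2 * ((d:ℤ) - i)) (by ring)
        linear_combination a' * b' * this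
    · rw [hUbot i (by omega), Submodule.mem_bot] at hv
      rw [hv]
      simp
  -- relation 4
  have rel4 : (q - q⁻¹)⁻¹ • (q • (B' * A) - q⁻¹ • (A * B')) = (a * b') • (1 : Module.End K V) := by
    apply TD_ext_from_cover hUtop
    intro i v hv
    by_cases hi : 0 ≤ i ∧ i ≤ (d:ℤ)
    · refine TD_core' hne A B' v (A v - θ i • v) (θ i)
        (b' * q ^ ((d:ℤ) - 2 * i)) (b' * q ^ ((d:ℤ) - 2 * (i + 1))) (by abel)
        (hB' i hi.1 hi.2 v hv) (hB'ext (i + 1) _ (hU1 i hi.1 hi.2 v hv)) ?_ ?_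
      · have := TD_q_shift hq0 ((d:ℤ) - 2 * (i + 1)) ((d:ℤ) - 2 * i) (by ring)
        linear_combination b' * this
      · rw [hθ i hi.1 hi.2]
        have := TD_q_cancel hq0 ((d:ℤ) - 2 * i) (2 * i - (d:ℤ)) (by ring)
        linear_combination a * b' * this
    · rw [hUbot i (by omega), Submodule.mem_bot] at hv
      rw [hv]
      simp
  exact ⟨rel1, rel2, rel3, rel4⟩
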